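/- Let T be a real symmetric invertible n×n matrix and α > 0. Then ‖(αI − iT)T⁻¹‖₂ = √(α² + μ_min²)/μ_min, where μ_min is the smallest absolute value of an eigenvalue of T. -/

import Mathlib

open Matrix
open scoped Matrix.Norms.L2Operator ENNReal NNReal

noncomputable instance matrixCStarAlg (n : ℕ) : CStarAlgebra (Matrix (Fin n) (Fin n) ℂ) := { }

/-- Spectral (operator 2-) norm of a complex matrix. -/
noncomputable def spec2Norm {n : ℕ} (M : Matrix (Fin n) (Fin n) ℂ) : ℝ :=
  ‖Matrix.toEuclideanCLM (𝕜 := ℂ) M‖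

lemma mem_spectrum_map_iff {n : ℕ} (T : Matrix (Fin n) (Fin n) ℝ) (x : ℝ) :
    (x : ℂ) ∈ spectrum ℂ (T.map Complex.ofReal) ↔ x ∈ spectrum ℝ T := by
  rw [spectrum.mem_iff, spectrum.mem_iff, Matrix.isUnit_iff_isUnit_det,
    Matrix.isUnit_iff_isUnit_det, isUnit_iff_ne_zero, isUnit_iff_ne_zero]
  have h : (algebraMap ℂ (Matrix (Fin n) (Fin n) ℂ) (x : ℂ) - T.map Complex.ofReal)
      = (algebraMap ℝ (Matrix (Fin n) (Fin n) ℝ) x - T).map (algebraMap ℝ ℂ) := by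
    ext i j
    simp [Matrix.algebraMap_matrix_apply, Matrix.map_apply, apply_ite]
  rw [h, ← RingHom.mapMatrix_apply, ← RingHom.map_det]
  simp

lemma spec_aux {n : ℕ} (M : Matrix (Fin n) (Fin n) ℂ) (hM : IsUnit M) {a : ℂ} (ha : a ≠ 0)
    (z : ℂ) :
    z ∈ spectrum ℂ (a • M⁻¹ - Complex.I • (1 : Matrix (Fin n) (Fin n) ℂ)) ↔
      ∃ μ ∈ spectrum ℂ M, z = a / μ - Complex.I := by
  have hdet : IsUnit M.det := (Matrix.isUnit_iff_isUnit_det M).mp hM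
  have hdet' : M.det ≠ 0 := hdet.ne_zero
  have hdetinv : M⁻¹.det ≠ 0 := by
    rw [Matrix.det_nonsing_inv]
    simpa using hdet'
  have key : ∀ w : ℂ, w ≠ 0 →
      (¬ IsUnit (w • (1 : Matrix (Fin n) (Fin n) ℂ) - a • M⁻¹) ↔ a / w ∈ spectrum ℂ M) := by
    intro w hw
    have h1 : w • (1 : Matrix (Fin n) (Fin n) ℂ) - a • M⁻¹ = M⁻¹ * (w • M - a • 1) := by
      rw [mul_sub, Matrix.mul_smul, Matrix.nonsing_inv_mul M hdet, Matrix.mul_smul, mul_one]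
    have h2 : w • M - a • (1 : Matrix (Fin n) (Fin n) ℂ) = (-w) • ((a / w) • 1 - M) := by
      rw [smul_sub, smul_smul, show -w * (a / w) = -a from by field_simp [mul_comm]]
      module
    rw [spectrum.mem_iff, Algebra.algebraMap_eq_smul_one, h1, h2]
    rw [Matrix.isUnit_iff_isUnit_det, Matrix.isUnit_iff_isUnit_det, Matrix.det_mul,
      Matrix.det_smul, isUnit_iff_ne_zero, isUnit_iff_ne_zero]
    simp [hdetinv, hdet', hw, sub_eq_zero, pow_ne_zero, neg_ne_zero]
  have hz : ∀ z : ℂ, (algebraMap ℂ (Matrix (Fin n) (Fin n) ℂ) z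
      - (a • M⁻¹ - Complex.I • 1)) = (z + Complex.I) • 1 - a • M⁻¹ := by
    intro z
    rw [Algebra.algebraMap_eq_smul_one, add_smul]
    module
  have h0 : (0 : ℂ) ∉ spectrum ℂ M := spectrum.notMem_iff.mpr (by simpa using hM)
  rw [spectrum.mem_iff, hz]
  by_cases hw : z + Complex.I = 0
  · rw [hw]
    constructor
    · intro hcon
      exfalso
      apply hcon
      rw [zero_smul, zero_sub, ← neg_smul]
      rw [Matrix.isUnit_iff_isUnit_det, Matrix.det_smul, isUnit_iff_ne_zero]
      exact mul_ne_zero (pow_ne_zero _ (neg_ne_zero.mpr ha)) hdetinv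
    · rintro ⟨μ, hμ, rfl⟩
      exfalso
      have hμ0 : μ ≠ 0 := fun h => h0 (h ▸ hμ)
      have : a / μ ≠ 0 := div_ne_zero ha hμ0
      rw [sub_add_cancel] at hw
      exact this hw
  · rw [key _ hw]
    constructor
    · intro h
      refine ⟨a / (z + Complex.I), h, ?_⟩
      rw [show a / (a / (z + Complex.I)) = z + Complex.I from by
        rw [div_div_eq_mul_div, mul_comm, mul_div_assoc, div_self ha, mul_one]]
      ring
    · rintro ⟨μ, hμ, rfl⟩
      have hμ0 : μ ≠ 0 := fun h => h0 (h ▸ hμ)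
      have : a / μ - Complex.I + Complex.I = a / μ := by ring
      rw [this]
      rwa [show a / (a / μ) = μ from by
        rw [div_div_eq_mul_div, mul_comm, mul_div_assoc, div_self ha, mul_one]]

theorem stmt_7 {n : ℕ} (T : Matrix (Fin n) (Fin n) ℝ)
    (hT : T.IsSymm) (hTinv : IsUnit T)
    (α : ℝ) (hα : 0 < α)
    (muMin : ℝ)
    (hmu_mem : ∃ x ∈ spectrum ℝ T, |x| = muMin)
    (hmu_min : ∀ x ∈ spectrum ℝ T, muMin ≤ |x|) :
    spec2Norm (((α : ℂ) • (1 : Matrix (Fin n) (Fin n) ℂ) -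
        Complex.I • T.map Complex.ofReal) * (T.map Complex.ofReal)⁻¹)
      = Real.sqrt (α ^ 2 + muMin ^ 2) / muMin := by
  obtain ⟨μ0, hμ0mem, hμ0abs⟩ := hmu_mem
  set M : Matrix (Fin n) (Fin n) ℂ := T.map Complex.ofReal with hMdef
  have hTdet : T.det ≠ 0 := ((Matrix.isUnit_iff_isUnit_det T).mp hTinv).ne_zero
  have hMdet : IsUnit M.det := by
    have hmm : M = (algebraMap ℝ ℂ).mapMatrix T := by
      ext i j
      simp [hMdef, Matrix.map_apply]
    rw [hmm, ← RingHom.map_det]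
    simpa using hTdet
  have hMunit : IsUnit M := (Matrix.isUnit_iff_isUnit_det M).mpr hMdet
  have hα' : ((α : ℂ)) ≠ 0 := by exact_mod_cast hα.ne'
  have hμ0ne : μ0 ≠ 0 := by
    intro h
    exact ((spectrum.zero_mem_iff (R := ℝ)).mp (h ▸ hμ0mem)) hTinv
  have hmupos : 0 < muMin := hμ0abs ▸ abs_pos.mpr hμ0ne
  have hexpr : ((α : ℂ) • (1 : Matrix (Fin n) (Fin n) ℂ) - Complex.I • M) * M⁻¹
      = (α : ℂ) • M⁻¹ - Complex.I • 1 := by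
    rw [sub_mul, smul_mul_assoc, smul_mul_assoc, one_mul, Matrix.mul_nonsing_inv M hMdet]
  set B := (α : ℂ) • M⁻¹ - Complex.I • (1 : Matrix (Fin n) (Fin n) ℂ) with hBdef
  have hMherm : Mᴴ = M := by
    ext i j
    simp [hMdef, Matrix.conjTranspose_apply, Matrix.map_apply, hT.apply]
  have hinvherm : (M⁻¹)ᴴ = M⁻¹ := by rw [Matrix.conjTranspose_nonsing_inv, hMherm]
  have hstarB : star B = (α : ℂ) • M⁻¹ + Complex.I • 1 := by
    rw [hBdef, star_sub, star_smul, star_smul, Matrix.star_eq_conjTranspose,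
      Matrix.star_eq_conjTranspose, hinvherm, Matrix.conjTranspose_one]
    simp [Complex.star_def, Complex.conj_ofReal]
  have hnormal : IsStarNormal B := ⟨by
    rw [hstarB, hBdef]
    have hc : Commute (Complex.I • (1 : Matrix (Fin n) (Fin n) ℂ)) ((α : ℂ) • M⁻¹) :=
      (Commute.one_left _).smul_left _
    exact ((Commute.refl _).sub_right hc.symm).add_left (hc.sub_right (Commute.refl _))⟩
  have hspec : ∀ z, z ∈ spectrum ℂ B ↔ ∃ μ ∈ spectrum ℂ M, z = (α : ℂ) / μ - Complex.I :=
    fun z => spec_aux M hMunit hα' z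
  set r := Real.sqrt (α ^ 2 + muMin ^ 2) / muMin with hrdef
  have hr0 : 0 ≤ r := by positivity
  have hrr : r = Real.sqrt (α ^ 2 / muMin ^ 2 + 1) := by
    rw [show α ^ 2 / muMin ^ 2 + 1 = (α ^ 2 + muMin ^ 2) / muMin ^ 2 from by field_simp]
    rw [Real.sqrt_div (by positivity), Real.sqrt_sq hmupos.le]
  have hnz : ∀ t : ℝ, ‖(α : ℂ) / (t : ℂ) - Complex.I‖ = Real.sqrt ((α / t) ^ 2 + 1) := by
    intro t
    rw [← Complex.ofReal_div, Complex.norm_def, Complex.normSq_apply]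
    simp only [Complex.sub_re, Complex.sub_im, Complex.ofReal_re, Complex.ofReal_im,
      Complex.I_re, Complex.I_im]
    congr 1
    ring
  have hsa : IsSelfAdjoint M := by
    show star M = M
    rw [Matrix.star_eq_conjTranspose, hMherm]
  have hub : ∀ z ∈ spectrum ℂ B, ‖z‖ ≤ r := by
    intro z hz
    obtain ⟨μ, hμ, rfl⟩ := (hspec z).mp hz
    have hμt : μ = (μ.re : ℂ) := hsa.mem_spectrum_eq_re hμ
    set t := μ.re
    have htT : t ∈ spectrum ℝ T := (mem_spectrum_map_iff T t).mp (hμt ▸ hμ)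
    have htmin : muMin ≤ |t| := hmu_min t htT
    rw [hμt, hnz t, hrr]
    apply Real.sqrt_le_sqrt
    have h1 : (α / t) ^ 2 ≤ α ^ 2 / muMin ^ 2 := by
      have hms : muMin ^ 2 ≤ t ^ 2 := by
        calc muMin ^ 2 ≤ |t| ^ 2 := pow_le_pow_left₀ hmupos.le htmin 2
          _ = t ^ 2 := sq_abs t
      have ht2 : 0 < t ^ 2 := lt_of_lt_of_le (by positivity) hms
      rw [div_pow, div_le_div_iff₀ ht2 (by positivity)]
      nlinarith [sq_nonneg α]
    linarith
  have hz0 : ((α : ℂ) / (μ0 : ℂ) - Complex.I) ∈ spectrum ℂ B :=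
    (hspec _).mpr ⟨(μ0 : ℂ), (mem_spectrum_map_iff T μ0).mpr hμ0mem, rfl⟩
  have hz0norm : ‖(α : ℂ) / (μ0 : ℂ) - Complex.I‖ = r := by
    rw [hnz, hrr]
    congr 2
    rw [div_pow, show muMin ^ 2 = μ0 ^ 2 from by rw [← hμ0abs, sq_abs]]
  have hrad := IsStarNormal.spectralRadius_eq_nnnorm B
  rw [hexpr, show spec2Norm B = ‖B‖ from (Matrix.cstar_norm_def B).symm]
  apply le_antisymm
  · have hle : spectralRadius ℂ B ≤ ENNReal.ofReal r := by
      unfold spectralRadius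
      refine iSup₂_le fun k hk => ?_
      rw [← enorm_eq_nnnorm, ← ofReal_norm]
      exact ENNReal.ofReal_le_ofReal (hub k hk)
    rw [hrad, ← enorm_eq_nnnorm, ← ofReal_norm] at hle
    exact (ENNReal.ofReal_le_ofReal_iff hr0).mp hle
  · have h1 : (‖(α : ℂ) / (μ0 : ℂ) - Complex.I‖₊ : ℝ≥0∞) ≤ spectralRadius ℂ B :=
      le_iSup₂ (f := fun k (_ : k ∈ spectrum ℂ B) => (‖k‖₊ : ℝ≥0∞)) _ hz0
    rw [hrad] at h1
    have h2 : ‖(α : ℂ) / (μ0 : ℂ) - Complex.I‖ ≤ ‖B‖ := by exact_mod_cast h1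
    rwa [hz0norm] at h2
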